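/- Let Ω be a nonempty set, f : Ω → ℂ with f(Ω) uncountable, let r_1 > ··· > r_N be positive reals linearly independent over ℚ, and let P be a nonzero polynomial in N complex variables without constant term. Then the function x ↦ P(e^{r_1 f(x)}, ..., e^{r_N f(x)}) is not identically zero on Ω. -/

import Mathlib

open Complex MvPolynomial Finset Filter

/-- The character `z ↦ exp (l * z)` as a monoid hom from `Multiplicative ℂ`. -/
noncomputable def expChar (l : ℝ) : Multiplicative ℂ →* ℂ where
  toFun z := Complex.exp (l * Multiplicative.toAdd z)
  map_one' := by simp
  map_mul' a b := by
    simp [mul_add, Complex.exp_add]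

lemma expChar_injective : Function.Injective expChar := by
  intro a b hab
  have h := DFunLike.congr_fun hab (Multiplicative.ofAdd (1 : ℂ))
  simp only [expChar, MonoidHom.coe_mk, OneHom.coe_mk, toAdd_ofAdd,
    mul_one] at h
  have : Real.exp a = Real.exp b := by
    exact_mod_cast (by simpa [Complex.ofReal_exp] using h : ((Real.exp a : ℂ)) = Real.exp b)
  exact Real.exp_injective this

lemma linearIndependent_expChar :
    LinearIndependent ℂ (fun l : ℝ => (fun z : ℂ => Complex.exp (l * z))) := by
  have h := (linearIndependent_monoidHom (Multiplicative ℂ) ℂ).comp expChar expChar_injective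
  exact h

lemma eval_exp_eq (N : ℕ) (r : Fin N → ℝ) (P : MvPolynomial (Fin N) ℂ) (z : ℂ) :
    MvPolynomial.eval (fun i => Complex.exp ((r i : ℂ) * z)) P
      = ∑ d ∈ P.support, P.coeff d * Complex.exp (((∑ i, (d i : ℝ) * r i : ℝ) : ℂ) * z) := by
  rw [MvPolynomial.eval_eq']
  refine Finset.sum_congr rfl fun d _ => ?_
  congr 1
  have : ∀ i : Fin N, Complex.exp ((r i : ℂ) * z) ^ d i
      = Complex.exp ((d i : ℂ) * ((r i : ℂ) * z)) := fun i => by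
    rw [← Complex.exp_nat_mul]
  simp only [this]
  rw [← Complex.exp_sum]
  congr 1
  push_cast
  rw [Finset.sum_mul]
  refine Finset.sum_congr rfl fun i _ => ?_
  ring

lemma lam_injective (N : ℕ) (r : Fin N → ℝ) (hind : LinearIndependent ℚ r) :
    Function.Injective (fun d : Fin N →₀ ℕ => ∑ i, (d i : ℝ) * r i) := by
  intro d d' h
  simp only at h
  have key : ∀ i, ((d i : ℚ) - (d' i : ℚ)) = 0 := by
    rw [Fintype.linearIndependent_iff] at hind
    apply hind
    have : ∑ i, (((d i : ℚ) - (d' i : ℚ)) • r i)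
        = ∑ i, (d i : ℝ) * r i - ∑ i, (d' i : ℝ) * r i := by
      rw [← Finset.sum_sub_distrib]
      refine Finset.sum_congr rfl fun i _ => ?_
      rw [Rat.smul_def]
      push_cast
      ring
    rw [this, h, sub_self]
  ext i
  have := key i
  have : (d i : ℚ) = (d' i : ℚ) := by linarith
  exact_mod_cast this

lemma accPt_of_uncountable {s : Set ℂ} (hs : ¬ s.Countable) :
    ∃ z : ℂ, AccPt z (Filter.principal s) := by
  have : ∃ n : ℕ, (s ∩ Metric.closedBall 0 n).Infinite := by
    by_contra hcon
    push_neg at hcon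
    apply hs
    have : s = ⋃ n : ℕ, s ∩ Metric.closedBall 0 n := by
      ext z
      simp only [Set.mem_iUnion, Set.mem_inter_iff, Metric.mem_closedBall, dist_zero_right]
      constructor
      · intro hz
        obtain ⟨n, hn⟩ := exists_nat_ge ‖z‖
        exact ⟨n, hz, hn⟩
      · rintro ⟨n, hz, -⟩; exact hz
    rw [this]
    exact Set.countable_iUnion fun n => (hcon n).countable
  obtain ⟨n, hn⟩ := this
  obtain ⟨z, -, hz⟩ := hn.exists_accPt_of_subset_isCompact
    (isCompact_closedBall (0 : ℂ) n) Set.inter_subset_right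
  exact ⟨z, hz.mono (le_principal_iff.mpr (Filter.mem_principal.mpr Set.inter_subset_left))⟩

/-- Let `Ω` be nonempty, `f : Ω → ℂ` with uncountable range,
let `r₁ > ⋯ > r_N` be positive reals linearly independent over `ℚ`, and let `P`
be a nonzero polynomial in `N` complex variables without constant term.  Then
`x ↦ P(e^{r₁ f(x)},…,e^{r_N f(x)})` is not identically zero on `Ω`. -/
theorem mv_poly_of_exponentials_not_identically_zero
    (Ω : Type*) [Nonempty Ω] (f : Ω → ℂ) (hunc : ¬ (Set.range f).Countable)
    (N : ℕ) (r : Fin N → ℝ) (hpos : ∀ i, 0 < r i) (hanti : StrictAnti r)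
    (hind : LinearIndependent ℚ r)
    (P : MvPolynomial (Fin N) ℂ) (hP : P ≠ 0) (hP0 : MvPolynomial.constantCoeff P = 0) :
    ∃ x : Ω, MvPolynomial.eval (fun i => Complex.exp ((r i : ℂ) * f x)) P ≠ 0 := by
  by_contra hcon
  push_neg at hcon
  set Λ : (Fin N →₀ ℕ) → ℝ := fun d => ∑ i, (d i : ℝ) * r i with hΛ
  set g : ℂ → ℂ := fun z => ∑ d ∈ P.support, P.coeff d * Complex.exp ((Λ d : ℂ) * z) with hg
  have hgz : ∀ x : Ω, g (f x) = 0 := fun x => by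
    rw [hg]; simp only [hΛ]; rw [← eval_exp_eq]; exact hcon x
  have hzero_unc : ¬ ({z : ℂ | g z = 0}).Countable := by
    intro h
    refine hunc (h.mono ?_)
    rintro - ⟨x, rfl⟩
    exact hgz x
  obtain ⟨z₀, hz₀⟩ := accPt_of_uncountable hzero_unc
  have hganal : AnalyticOnNhd ℂ g Set.univ := by
    refine DifferentiableOn.analyticOnNhd ?_ isOpen_univ
    refine Differentiable.differentiableOn ?_
    refine Differentiable.fun_sum fun d _ => ?_
    exact (differentiable_const _).mul (((differentiable_const _).mul differentiable_id).cexp)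
  have hfreq : ∃ᶠ z in nhdsWithin z₀ {z₀}ᶜ, g z = 0 := frequently_mem_iff_neBot.mpr hz₀
  have hg0 : ∀ z, g z = 0 := fun z =>
    hganal.eqOn_zero_of_preconnected_of_frequently_eq_zero isPreconnected_univ
      (Set.mem_univ z₀) hfreq (Set.mem_univ z)
  have hli : LinearIndependent ℂ
      (fun d : Fin N →₀ ℕ => fun z : ℂ => Complex.exp ((Λ d : ℂ) * z)) :=
    linearIndependent_expChar.comp Λ (lam_injective N r hind)
  obtain ⟨d, hd⟩ := (MvPolynomial.support_nonempty.mpr hP)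
  refine MvPolynomial.mem_support_iff.mp hd ?_
  refine linearIndependent_iff'.mp hli P.support (fun d => P.coeff d) ?_ d hd
  funext z
  simpa [Finset.sum_apply] using hg0 z
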